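/- Let (C, J) be a small site such that the Grothendieck topos Sh(C,J) of Type-valued sheaves is locally connected. Then an object E of Sh(C,J) is connected if and only if the hom-functor Hom(E, −) : Sh(C,J) → Type preserves all small coproducts. -/

import Mathlib

open CategoryTheory CategoryTheory.Limits Opposite

universe u

/-- An object `E` of a category with binary coproducts is *connected* if whenever
`E` is isomorphic to a coproduct `U ⨿ V`, exactly one of `U` and `V` is not an
initial object. -/
def IsConnectedObject {D : Type*} [Category D] [HasBinaryCoproducts D] (E : D) : Prop :=
  ∀ (U V : D), (E ≅ U ⨿ V) →
    Xor' (¬ Nonempty (IsInitial U)) (¬ Nonempty (IsInitial V))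

instance sheafType_hasBinaryCoproducts {C : Type u} [SmallCategory C]
    (J : GrothendieckTopology C) : HasBinaryCoproducts (Sheaf J (Type u)) :=
  Sheaf.instHasColimitsOfShape

set_option linter.unusedSectionVars false
set_option linter.unusedVariables false

namespace AuxConn

section Types

variable {I : Type u}

/-- Canonical map from the sigma type to a cocone point. -/
def toPt {F : Discrete I ⥤ Type u} (c : Cocone F) : (Σ i : I, F.obj ⟨i⟩) → c.pt :=
  fun p => c.ι.app ⟨p.1⟩ p.2

/-- The standard sigma cocone. -/
@[simps]
def sigmaCocone (F : Discrete I ⥤ Type u) : Cocone F where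
  pt := Σ i : I, F.obj ⟨i⟩
  ι := Discrete.natTrans (fun i => ↾fun x => ⟨i.as, x⟩)

/-- The sigma cocone is colimiting. -/
def sigmaIsColimit (F : Discrete I ⥤ Type u) : IsColimit (sigmaCocone F) where
  desc s := ↾fun (p : Σ i : I, F.obj ⟨i⟩) => s.ι.app ⟨p.1⟩ p.2
  fac s j := rfl
  uniq s m w := by
    ext ⟨i, x⟩
    exact types_congr_hom (w ⟨i⟩) x

theorem nonempty_isColimit_iff {F : Discrete I ⥤ Type u} (c : Cocone F) :
    Nonempty (IsColimit c) ↔ Function.Bijective (toPt c) := by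
  constructor
  · rintro ⟨h⟩
    have : toPt c = ((sigmaIsColimit F).coconePointUniqueUpToIso h).hom := by
      funext p
      exact (types_congr_hom ((sigmaIsColimit F).comp_coconePointUniqueUpToIso_hom h ⟨p.1⟩) p.2).symm
    rw [this]
    exact ((sigmaIsColimit F).coconePointUniqueUpToIso h).toEquiv.bijective
  · intro hb
    exact ⟨IsColimit.ofIsoColimit (sigmaIsColimit F)
      (Cocones.ext (Equiv.ofBijective _ hb).toIso (fun j => rfl))⟩

theorem types_vanKampen {F : Discrete I ⥤ Type u} (c : Cocone F) (hc : IsColimit c) :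
    IsVanKampenColimit c := by
  intro F' c' α f h hα
  have hb : Function.Bijective (toPt c) := (nonempty_isColimit_iff c).mp ⟨hc⟩
  have hcomm : ∀ (j : Discrete I) (x : F'.obj j),
      c.ι.app j (α.app j x) = f (c'.ι.app j x) := by
    intro j x
    exact types_congr_hom (NatTrans.congr_app h j) x
  rw [nonempty_isColimit_iff c']
  constructor
  · intro hb' j
    have comm : c'.ι.app j ≫ f = α.app j ≫ c.ι.app j := by
      ext x; exact (hcomm j x).symm
    refine IsPullback.of_isLimit' ⟨comm⟩ ((PullbackCone.isLimitEquivBijective _).symm ⟨?_, ?_⟩)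
    · intro z w hzw
      have h1 : c'.ι.app j z = c'.ι.app j w := congr_arg (fun q => q.1.1) hzw
      have : toPt c' ⟨j.as, z⟩ = toPt c' ⟨j.as, w⟩ := h1
      have := hb'.injective this
      exact eq_of_heq (Sigma.mk.inj this).2
    · rintro ⟨⟨x, y⟩, (hxy : f x = c.ι.app j y)⟩
      obtain ⟨⟨k, z⟩, rfl⟩ := hb'.surjective x
      have : toPt c ⟨k, α.app ⟨k⟩ z⟩ = toPt c ⟨j.as, y⟩ :=
        (hcomm ⟨k⟩ z).trans hxy
      have := hb.injective this
      rw [Sigma.mk.inj_iff] at this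
      obtain ⟨rfl, hy⟩ := this
      have hy' : α.app ⟨j.as⟩ z = y := eq_of_heq hy
      refine ⟨z, ?_⟩
      apply Subtype.ext
      apply Prod.ext
      · rfl
      · exact hy'
  · intro H
    constructor
    · rintro ⟨i, z⟩ ⟨k, w⟩ hzw
      have h1 : toPt c ⟨i, α.app ⟨i⟩ z⟩ = toPt c ⟨k, α.app ⟨k⟩ w⟩ := by
        simp only [toPt, hcomm]
        exact congr_arg f hzw
      have := hb.injective h1
      rw [Sigma.mk.inj_iff] at this
      obtain ⟨rfl, hy⟩ := this
      have hy' : α.app ⟨i⟩ z = α.app ⟨i⟩ w := eq_of_heq hy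
      have hz : c'.ι.app ⟨i⟩ z = c'.ι.app ⟨i⟩ w := hzw
      have := PullbackCone.IsLimit.type_ext (H ⟨i⟩).isLimit hz hy'
      exact congr_arg (Sigma.mk i) this
    · intro x
      obtain ⟨⟨i, y⟩, hy⟩ := hb.surjective (f x)
      let e := PullbackCone.IsLimit.equivPullbackObj (H ⟨i⟩).isLimit
      have hfx : f x = c.ι.app ⟨i⟩ y := hy.symm
      let z := e.symm ⟨⟨x, y⟩, hfx⟩
      refine ⟨⟨i, z⟩, ?_⟩
      exact PullbackCone.IsLimit.equivPullbackObj_symm_apply_fst (H ⟨i⟩).isLimit ⟨⟨x, y⟩, hfx⟩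

end Types

section Site

variable {I : Type u}

variable {C : Type u} [SmallCategory C] (J : GrothendieckTopology C)

theorem presheaf_vanKampen {F : Discrete I ⥤ (Cᵒᵖ ⥤ Type u)} (c : Cocone F)
    (hc : IsColimit c) : IsVanKampenColimit c := by
  apply isVanKampenColimit_of_evaluation
  intro X
  exact types_vanKampen _ (isColimitOfPreserves ((evaluation Cᵒᵖ (Type u)).obj X) hc)

theorem sheaf_vanKampen {F : Discrete I ⥤ Sheaf J (Type u)} (c : Cocone F)
    (hc : IsColimit c) : IsVanKampenColimit c := by
  let Gl := presheafToSheaf J (Type u)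
  let Gr := sheafToPresheaf J (Type u)
  let adjS : Gl ⊣ Gr := sheafificationAdjunction J (Type u)
  let c₀ : Cocone (F ⋙ Gr) := colimit.cocone (F ⋙ Gr)
  have H : IsVanKampenColimit c₀ := presheaf_vanKampen _ (colimit.isColimit _)
  have H2 : IsVanKampenColimit (Gl.mapCocone c₀) := H.map_reflective adjS
  haveI : IsIso adjS.counit := inferInstance
  let α : F ⟶ (F ⋙ Gr) ⋙ Gl :=
    F.rightUnitor.inv ≫ Functor.whiskerLeft F (inv adjS.counit) ≫ (Functor.associator F Gr Gl).inv
  haveI : IsIso α := by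
    dsimp [α]
    infer_instance
  have H3 : IsVanKampenColimit ((Cocone.precompose α).obj (Gl.mapCocone c₀)) :=
    H2.precompose_isIso α
  exact H3.of_iso (H3.isColimit.uniqueUpToIso hc)


end Site

section Conn

variable {I : Type u}

/-- Splitting a coproduct into one summand and the rest. -/
noncomputable def sigmaSplitIso {S : Type*} [Category.{u} S] [HasColimits S] (X : I → S) (i₀ : I) :
    (∐ X) ≅ X i₀ ⨿ (∐ fun p : {i : I // i ≠ i₀} => X p.1) := by
  classical
  exact
  { hom := Sigma.desc fun i =>
      if h : i = i₀ then eqToHom (by rw [h]) ≫ coprod.inl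
      else Sigma.ι (fun p : {i : I // i ≠ i₀} => X p.1) ⟨i, h⟩ ≫ coprod.inr
    inv := coprod.desc (Sigma.ι X i₀) (Sigma.desc fun p => Sigma.ι X p.1)
    hom_inv_id := by
      apply Limits.Sigma.hom_ext
      intro i
      simp only [colimit.ι_desc_assoc, Cofan.mk_pt, Cofan.mk_ι_app, Category.comp_id,
        Discrete.functor_obj]
      split_ifs with h
      · subst h; simp; exact coprod.inl_desc _ _
      · simp; rw [coprod.inr_desc]; simp
    inv_hom_id := by
      apply Limits.coprod.hom_ext
      · simp; exact coprod.inl_desc _ _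
      · rw [coprod.inr_desc_assoc, Category.comp_id]
        apply Limits.Sigma.hom_ext
        intro p
        simp only [colimit.ι_desc_assoc, Cofan.mk_pt, Cofan.mk_ι_app, colimit.ι_desc,
          Discrete.functor_obj]
        rw [dif_neg p.2] }

variable {S : Type*} [Category.{u} S] [HasColimits S] [HasStrictInitialObjects S]

theorem not_initial_of_connected {E : S} (hE : IsConnectedObject E) :
    ¬ Nonempty (IsInitial E) := by
  rintro ⟨hEi⟩
  have h0 : IsInitial ((⊥_ S) ⨿ (⊥_ S)) := by
    apply IsInitial.ofUniqueHom (fun X => coprod.desc (initial.to X) (initial.to X))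
    intro X m
    apply coprod.hom_ext <;> apply initial.hom_ext
  have := hE _ _ (hEi.uniqueUpToIso h0)
  rcases this with ⟨h1, h2⟩ | ⟨h1, h2⟩ <;> exact h1 ⟨initialIsInitial⟩

theorem exists_initial_rest {E : S} (hE : IsConnectedObject E) {P : I → S}
    {c : Cocone (Discrete.functor P)} (hc : IsColimit c) (he : c.pt ≅ E) :
    ∃ i₀ : I, ∀ i, i ≠ i₀ → Nonempty (IsInitial (P i)) := by
  have hne : ¬ Nonempty (IsInitial E) := not_initial_of_connected hE
  by_cases hall : ∀ i : I, Nonempty (IsInitial (P i))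
  · exfalso
    apply hne
    have key : ∀ (X : S) (u v : c.pt ⟶ X), u = v := fun X u v =>
      hc.hom_ext (fun j => (hall j.as).some.hom_ext _ _)
    refine ⟨IsInitial.ofUniqueHom
      (fun X => he.inv ≫ hc.desc ⟨X, Discrete.natTrans fun i => (hall i.as).some.to X⟩) ?_⟩
    intro X m
    have h2 := key X (he.hom ≫ m) (hc.desc ⟨X, Discrete.natTrans fun i => (hall i.as).some.to X⟩)
    rw [← h2, Iso.inv_hom_id_assoc]
  · push_neg at hall
    obtain ⟨i₀, hi₀⟩ := hall
    refine ⟨i₀, fun i hi => ?_⟩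
    have iso : E ≅ P i ⨿ (∐ fun p : {k : I // k ≠ i} => P p.1) :=
      he.symm ≪≫ hc.coconePointUniqueUpToIso (colimit.isColimit _) ≪≫ sigmaSplitIso P i
    have hV : ¬ Nonempty (IsInitial (∐ fun p : {k : I // k ≠ i} => P p.1)) := by
      rintro ⟨hV⟩
      have f := Sigma.ι (fun p : {k : I // k ≠ i} => P p.1) ⟨i₀, fun h => hi h.symm⟩
      haveI := hV.isIso_to f
      exact (not_nonempty_iff.mpr hi₀) ⟨hV.ofIso (asIso f).symm⟩
    rcases hE _ _ iso with ⟨h1, h2⟩ | ⟨h1, h2⟩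
    · exact absurd (not_not.mp h2) hV
    · exact not_not.mp h2


end Conn

end AuxConn

/-- For a locally connected Grothendieck topos `Sh(C,J)` (i.e. the constant sheaf
functor `Δ : Type → Sh(C,J)` admits a left adjoint `Π₀`), an object `E` is connected
if and only if `Hom(E, −)` preserves all small coproducts. -/
theorem connected_iff_hom_preserves_coproducts
    {C : Type u} [SmallCategory C] (J : GrothendieckTopology C)
    (Pi0 : Sheaf J (Type u) ⥤ Type u) (adj : Pi0 ⊣ constantSheaf J (Type u))
    (E : Sheaf J (Type u)) :
    IsConnectedObject E ↔
      ∀ I : Type u, PreservesColimitsOfShape (Discrete I) (coyoneda.obj (op E)) := by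
  classical
  haveI : HasColimitsOfShape (Discrete PEmpty.{1}) (Sheaf J (Type u)) := Sheaf.instHasColimitsOfShape
  haveI : HasColimits (Sheaf J (Type u)) := Sheaf.instHasColimitsOfSize
  constructor
  · intro hE I
    haveI : HasColimitsOfShape (Discrete I) (Sheaf J (Type u)) := Sheaf.instHasColimitsOfShape
    refine ⟨fun {F} => ?_⟩
    apply preservesColimit_of_preserves_colimit_cocone (colimit.isColimit F)
    have vk : IsVanKampenColimit (colimit.cocone F) :=
      AuxConn.sheaf_vanKampen J _ (colimit.isColimit F)
    apply Nonempty.some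
    rw [AuxConn.nonempty_isColimit_iff]
    constructor
    · rintro ⟨i, g⟩ ⟨k, h'⟩ hgh
      have hgh' : g ≫ colimit.ι F ⟨i⟩ = h' ≫ colimit.ι F ⟨k⟩ := hgh
      by_cases hik : i = k
      · subst hik
        haveI : Mono (colimit.ι F ⟨i⟩) := mono_of_cofan_isVanKampen vk ⟨i⟩
        have : g = h' := by
          rwa [cancel_mono] at hgh'
        rw [this]
      · exfalso
        have hP := isPullback_initial_to_of_cofan_isVanKampen vk ⟨i⟩ ⟨k⟩
          (fun hh => hik (congrArg Discrete.as hh))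
        let l : E ⟶ ⊥_ _ := hP.lift g h' hgh'
        exact AuxConn.not_initial_of_connected hE
          ⟨IsInitial.ofIso initialIsInitial (asIso l).symm⟩
    · intro g
      let P : I → Sheaf J (Type u) := fun i => pullback g (colimit.ι F ⟨i⟩)
      let F' : Discrete I ⥤ Sheaf J (Type u) := Discrete.functor P
      let α : F' ⟶ F := Discrete.natTrans fun j => pullback.snd g (colimit.ι F j)
      let c' : Cocone F' := ⟨E, Discrete.natTrans fun j => pullback.fst g (colimit.ι F j)⟩
      have h : α ≫ (colimit.cocone F).ι = c'.ι ≫ (Functor.const _).map g := by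
        apply NatTrans.ext
        funext j
        exact pullback.condition.symm
      obtain ⟨hc'⟩ := vk.isUniversal c' α g h (NatTrans.equifibered_of_discrete α)
        (fun j => IsPullback.of_hasPullback g (colimit.ι F j))
      obtain ⟨i₀, hrest⟩ := AuxConn.exists_initial_rest hE hc' (Iso.refl E)
      let s : E ⟶ P i₀ := hc'.desc ⟨P i₀, Discrete.natTrans fun j =>
        if hj : j.as = i₀ then eqToHom (congrArg P hj) else ((hrest j.as hj).some).to (P i₀)⟩
      have hs : s ≫ pullback.fst g (colimit.ι F ⟨i₀⟩) = 𝟙 E := by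
        apply hc'.hom_ext
        intro j
        have key : c'.ι.app j ≫ s ≫ pullback.fst g (colimit.ι F ⟨i₀⟩) = c'.ι.app j := by
          rw [← Category.assoc, hc'.fac]
          by_cases hj : j.as = i₀
          · obtain ⟨j⟩ := j
            cases hj
            simp [c', P]
          · exact ((hrest j.as hj).some).hom_ext _ _
        exact key.trans (Category.comp_id _).symm
      refine ⟨⟨i₀, s ≫ pullback.snd g (colimit.ι F ⟨i₀⟩)⟩, ?_⟩
      show (s ≫ pullback.snd g (colimit.ι F ⟨i₀⟩)) ≫ colimit.ι F ⟨i₀⟩ = g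
      rw [Category.assoc, ← pullback.condition, ← Category.assoc, hs, Category.id_comp]
  · intro hP U V e
    haveI := hP (ULift.{u, 0} WalkingPair)
    haveI : PreservesColimitsOfShape (Discrete WalkingPair) (coyoneda.obj (op E)) :=
      preservesColimitsOfShape_of_equiv (Discrete.equivalence Equiv.ulift) _
    haveI := hP PEmpty.{u + 1}
    haveI : PreservesColimitsOfShape (Discrete PEmpty.{1}) (coyoneda.obj (op E)) :=
      preservesColimitsOfShape_of_equiv
        (Discrete.equivalence (Equiv.equivOfIsEmpty PEmpty.{u + 1} PEmpty.{1})) _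
    have hHomInit : IsInitial ((coyoneda.obj (op E)).obj (⊥_ _)) :=
      initialIsInitial.isInitialObj _ _
    have hne : ¬ Nonempty (IsInitial E) := by
      rintro ⟨hEi⟩
      exact (hHomInit.to PEmpty (hEi.to (⊥_ _))).elim
    have hcol := isColimitOfPreserves (coyoneda.obj (op E)) (colimit.isColimit (pair U V))
    obtain ⟨j, y, hy⟩ := Types.jointly_surjective_of_isColimit hcol e.hom
    obtain ⟨_ | _⟩ := j
    · -- factors through U
      haveI : IsSplitEpi (coprod.inl : U ⟶ U ⨿ V) :=
        ⟨⟨⟨e.inv ≫ (y : E ⟶ U), by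
          refine (Category.assoc _ _ _).trans ?_
          exact (congrArg (fun t => e.inv ≫ t) hy).trans e.inv_hom_id⟩⟩⟩
      haveI : IsIso (coprod.inl : U ⟶ U ⨿ V) := isIso_of_mono_of_isSplitEpi _
      have hPB := FinitaryExtensive.isPullback_initial_to_binaryCofan (coprodIsCoprod U V)
      have hVinit : IsInitial V := by
        have l : V ⟶ ⊥_ _ := hPB.lift (coprod.inr ≫ (asIso (coprod.inl : U ⟶ U ⨿ V)).inv) (𝟙 V)
          (by exact (Category.assoc _ _ _).trans ((congrArg (fun t => (coprod.inr : V ⟶ U ⨿ V) ≫ t) (asIso (coprod.inl : U ⟶ U ⨿ V)).inv_hom_id).trans ((Category.comp_id _).trans (Category.id_comp _).symm)))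
        haveI : IsIso l := inferInstance
        exact IsInitial.ofIso initialIsInitial (asIso l).symm
      have hUne : ¬ Nonempty (IsInitial U) := by
        rintro ⟨hU⟩
        exact hne ⟨IsInitial.ofIso (hU.ofIso (asIso (coprod.inl : U ⟶ U ⨿ V))) e.symm⟩
      exact Or.inl ⟨hUne, fun hb => hb ⟨hVinit⟩⟩
    · -- factors through V
      haveI : IsSplitEpi (coprod.inr : V ⟶ U ⨿ V) :=
        ⟨⟨⟨e.inv ≫ (y : E ⟶ V), by
          refine (Category.assoc _ _ _).trans ?_
          exact (congrArg (fun t => e.inv ≫ t) hy).trans e.inv_hom_id⟩⟩⟩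
      haveI : IsIso (coprod.inr : V ⟶ U ⨿ V) := isIso_of_mono_of_isSplitEpi _
      have hPB := FinitaryExtensive.isPullback_initial_to_binaryCofan (coprodIsCoprod U V)
      have hUinit : IsInitial U := by
        have l : U ⟶ ⊥_ _ := hPB.lift (𝟙 U) (coprod.inl ≫ (asIso (coprod.inr : V ⟶ U ⨿ V)).inv)
          (by exact (Category.id_comp _).trans (((Category.assoc _ _ _).trans ((congrArg (fun t => (coprod.inl : U ⟶ U ⨿ V) ≫ t) (asIso (coprod.inr : V ⟶ U ⨿ V)).inv_hom_id).trans (Category.comp_id _))).symm))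
        haveI : IsIso l := inferInstance
        exact IsInitial.ofIso initialIsInitial (asIso l).symm
      have hVne : ¬ Nonempty (IsInitial V) := by
        rintro ⟨hV⟩
        exact hne ⟨IsInitial.ofIso (hV.ofIso (asIso (coprod.inr : V ⟶ U ⨿ V))) e.symm⟩
      exact Or.inr ⟨hVne, fun hb => hb ⟨hUinit⟩⟩
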